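/- Let G : ℝ → (ℝⁿ → ℝⁿ) be a continuous one-parameter group of affine transformations (G_α ∘ G_β = G_{α+β}) and suppose H_ε := (1/(2ε))∫_{−ε}^{ε} G_β dβ is invertible for some ε > 0. Then for all α, G_α = (1/(2ε)) ∫_{α−ε}^{α+ε} G_γ ∘ H_ε⁻¹ dγ; in particular α ↦ G_α is continuously differentiable. -/

import Mathlib

open MeasureTheory intervalIntegral


lemma sliding_contDiff {E : Type*} [NormedAddCommGroup E] [NormedSpace ℝ E] [CompleteSpace E]
    (f : ℝ → E) (hf : Continuous f) (ε : ℝ) :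
    ContDiff ℝ 1 (fun α => ∫ γ in (α - ε)..(α + ε), f γ) := by
  have hP : ContDiff ℝ 1 (fun x => ∫ t in (0:ℝ)..x, f t) := by
    rw [contDiff_one_iff_deriv]
    refine ⟨fun x => ((hf.integral_hasStrictDerivAt 0 x).hasDerivAt).differentiableAt, ?_⟩
    have : deriv (fun x => ∫ t in (0:ℝ)..x, f t) = f :=
      funext fun x => Continuous.deriv_integral f hf 0 x
    rw [this]; exact hf
  have heq : (fun α => ∫ γ in (α - ε)..(α + ε), f γ)
      = fun α => (∫ t in (0:ℝ)..(α + ε), f t) - ∫ t in (0:ℝ)..(α - ε), f t := by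
    funext α
    have := intervalIntegral.integral_add_adjacent_intervals
      (hf.intervalIntegrable (μ := volume) 0 (α - ε)) (hf.intervalIntegrable (α - ε) (α + ε))
    rw [eq_sub_iff_add_eq, add_comm, this]
  rw [heq]
  exact (hP.comp (contDiff_id.add contDiff_const)).sub (hP.comp (contDiff_id.sub contDiff_const))



/-- If the average `H_ε = (1/(2ε)) ∫_{-ε}^{ε} G_β dβ` of a continuous affine one-parameter
group `G_β(a) = A_β a + b_β` is invertible for some `ε > 0`, then
`G_α = (1/(2ε)) ∫_{α-ε}^{α+ε} G_γ ∘ H_ε⁻¹ dγ`; in particular `α ↦ G_α` is `C¹`. -/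
theorem affine_group_integral_representation (n : ℕ)
    (A : ℝ → ((Fin n → ℝ) →L[ℝ] (Fin n → ℝ))) (b : ℝ → Fin n → ℝ)
    (hAc : Continuous A) (hbc : Continuous b)
    (hgroup : ∀ α β : ℝ, ∀ a : Fin n → ℝ,
      A α (A β a + b β) + b α = A (α + β) a + b (α + β))
    (ε : ℝ) (hε : 0 < ε)
    (Hinv : (Fin n → ℝ) → (Fin n → ℝ))
    (hHinv : ∀ x : Fin n → ℝ,
      Hinv (((2 * ε)⁻¹ • ∫ β in (-ε)..ε, A β) x + (2 * ε)⁻¹ • ∫ β in (-ε)..ε, b β) = x ∧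
      ((2 * ε)⁻¹ • ∫ β in (-ε)..ε, A β) (Hinv x) + ((2 * ε)⁻¹ • ∫ β in (-ε)..ε, b β) = x) :
    (∀ α : ℝ, ∀ a : Fin n → ℝ,
      A α a + b α = (2 * ε)⁻¹ • ∫ γ in (α - ε)..(α + ε), (A γ (Hinv a) + b γ)) ∧
    ContDiff ℝ 1 A ∧ ContDiff ℝ 1 b := by
  have hε2 : (2 * ε) ≠ 0 := by positivity
  set H : (Fin n → ℝ) →L[ℝ] (Fin n → ℝ) := (2 * ε)⁻¹ • ∫ β in (-ε)..ε, A β with hHdef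
  set h : Fin n → ℝ := (2 * ε)⁻¹ • ∫ β in (-ε)..ε, b β with hhdef
  -- integrability facts
  have hintA : ∀ x y : ℝ, IntervalIntegrable A volume x y := fun x y => hAc.intervalIntegrable x y
  have hintb : ∀ x y : ℝ, IntervalIntegrable b volume x y := fun x y => hbc.intervalIntegrable x y
  have hintAc : ∀ (c : Fin n → ℝ) (x y : ℝ),
      IntervalIntegrable (fun β => A β c) volume x y :=
    fun c x y => (hAc.clm_apply continuous_const).intervalIntegrable x y
  have hintAcb : ∀ (c : Fin n → ℝ) (x y : ℝ),
      IntervalIntegrable (fun β => A β c + b β) volume x y :=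
    fun c x y => ((hAc.clm_apply continuous_const).add hbc).intervalIntegrable x y
  -- H applied
  have hHapp : ∀ c : Fin n → ℝ, H c = (2 * ε)⁻¹ • ∫ β in (-ε)..ε, A β c := by
    intro c
    rw [hHdef, ContinuousLinearMap.smul_apply, ContinuousLinearMap.intervalIntegral_apply (hintA _ _)]
  -- key identity
  have key : ∀ α : ℝ, ∀ a : Fin n → ℝ,
      A α a + b α = (2 * ε)⁻¹ • ∫ γ in (α - ε)..(α + ε), (A γ (Hinv a) + b γ) := by
    intro α a
    set c := Hinv a with hc
    have h1 : (∫ γ in (α - ε)..(α + ε), (A γ c + b γ))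
        = ∫ β in (-ε)..ε, (A (α + β) c + b (α + β)) := by
      rw [intervalIntegral.integral_comp_add_left (fun γ => A γ c + b γ) α,
        show α + -ε = α - ε by ring]
    have h2 : (∫ β in (-ε)..ε, (A (α + β) c + b (α + β)))
        = ∫ β in (-ε)..ε, (A α (A β c + b β) + b α) := by
      refine intervalIntegral.integral_congr fun β _ => ?_
      rw [hgroup]
    have h3 : (∫ β in (-ε)..ε, (A α (A β c + b β) + b α))
        = A α (∫ β in (-ε)..ε, (A β c + b β)) + (ε - -ε) • b α := by
      rw [intervalIntegral.integral_add (f := fun β => A α (A β c + b β))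
        (((continuous_const (y := A α)).clm_apply
          ((hAc.clm_apply continuous_const).add hbc)).intervalIntegrable _ _)
        (intervalIntegrable_const),
        intervalIntegral.integral_const,
        ContinuousLinearMap.intervalIntegral_comp_comm (A α) (hintAcb c _ _)]
    have h4 : (2 * ε)⁻¹ • ∫ β in (-ε)..ε, (A β c + b β) = H c + h := by
      rw [intervalIntegral.integral_add (hintAc c _ _) (hintb _ _), smul_add, hHapp, hhdef]
    have h5 : H c + h = a := (hHinv a).2
    rw [h1, h2, h3, smul_add, ← (A α).map_smul, h4, h5, smul_smul,
      show (2 * ε)⁻¹ * (ε - -ε) = 1 by field_simp; ring, one_smul]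
  refine ⟨key, ?_, ?_⟩
  · -- ContDiff of A
    -- H is bijective
    have hsurj : Function.Surjective H := by
      intro x
      refine ⟨Hinv (x + h), ?_⟩
      exact add_right_cancel (hHinv (x + h)).2
    have hbij : Function.Bijective H :=
      ⟨(LinearMap.injective_iff_surjective (f := (H : (Fin n → ℝ) →ₗ[ℝ] (Fin n → ℝ)))).mpr hsurj,
        hsurj⟩
    let E := (LinearEquiv.ofBijective (H : (Fin n → ℝ) →ₗ[ℝ] (Fin n → ℝ)) hbij).toContinuousLinearEquiv
    have hAcomp : ∀ α β : ℝ, (A α).comp (A β) = A (α + β) := by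
      intro α β
      refine ContinuousLinearMap.ext fun a => ?_
      have g1 := hgroup α β a
      have g2 := hgroup α β 0
      simp only [map_zero, zero_add] at g2
      have : A α (A β a + b β) = A (α + β) a + A α (b β) := by
        rw [← g2] at g1
        -- g1 : A α (A β a + b β) + b α = A (α+β) a + (A α (b β) + b α)
        have := g1
        rw [← add_assoc] at this
        exact add_right_cancel this
      simpa [map_add, add_comm, add_left_cancel_iff] using this
    have hrep : ∀ α : ℝ, A α
        = ((2 * ε)⁻¹ • ∫ γ in (α - ε)..(α + ε), A γ).comp (E.symm : (Fin n → ℝ) →L[ℝ] (Fin n → ℝ)) := by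
      intro α
      have hAH : (A α).comp H = (2 * ε)⁻¹ • ∫ γ in (α - ε)..(α + ε), A γ := by
        ext a
        rw [ContinuousLinearMap.smul_apply,
          ContinuousLinearMap.intervalIntegral_apply (hintA _ _)]
        have e1 : (∫ γ in (α - ε)..(α + ε), A γ a) = ∫ β in (-ε)..ε, A (α + β) a := by
          rw [intervalIntegral.integral_comp_add_left (fun γ => A γ a) α,
            show α + -ε = α - ε by ring]
        rw [e1]
        have e2 : (∫ β in (-ε)..ε, A (α + β) a) = ∫ β in (-ε)..ε, A α (A β a) := by
          refine intervalIntegral.integral_congr fun β _ => ?_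
          rw [← hAcomp]; rfl
        rw [e2, ContinuousLinearMap.intervalIntegral_comp_comm (A α) (hintAc a _ _),
          ContinuousLinearMap.comp_apply, hHapp, (A α).map_smul]
      have hHE : H.comp (E.symm : (Fin n → ℝ) →L[ℝ] (Fin n → ℝ)) = ContinuousLinearMap.id ℝ _ := by
        refine ContinuousLinearMap.ext fun x => ?_
        exact E.apply_symm_apply x
      calc A α = (A α).comp (H.comp (E.symm : (Fin n → ℝ) →L[ℝ] (Fin n → ℝ))) := by
            rw [hHE]; rfl
        _ = ((A α).comp H).comp (E.symm : (Fin n → ℝ) →L[ℝ] (Fin n → ℝ)) := by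
            rw [ContinuousLinearMap.comp_assoc]
        _ = _ := by rw [hAH]
    have : A = fun α => ((2 * ε)⁻¹ • ∫ γ in (α - ε)..(α + ε), A γ).comp
        (E.symm : (Fin n → ℝ) →L[ℝ] (Fin n → ℝ)) := funext hrep
    rw [this]
    exact ((contDiff_const (c := (2 * ε)⁻¹)).smul (sliding_contDiff A hAc ε)).clm_comp
      (contDiff_const (c := (E.symm : (Fin n → ℝ) →L[ℝ] (Fin n → ℝ))))
  · -- ContDiff of b
    have hrep : b = fun α => (2 * ε)⁻¹ • ∫ γ in (α - ε)..(α + ε), (A γ (Hinv 0) + b γ) := by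
      funext α
      have := key α 0
      simpa using this
    rw [hrep]
    exact (contDiff_const (c := (2 * ε)⁻¹)).smul
      (sliding_contDiff (fun γ => A γ (Hinv 0) + b γ) ((hAc.clm_apply continuous_const).add hbc) ε)
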